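/- Let f be an orientation-preserving homeomorphism of the circle S¹ possessing at least one periodic point. Then every point x ∈ S¹ has a well-defined Birkhoff limit μ_x, and μ_x is a periodic Dirac measure: μ_x = (1/q)∑_{j=0}^{q−1} δ_{f^j(p)} for some periodic point p of f of period q. -/

import Mathlib

open MeasureTheory Filter Topology ENNReal Function

noncomputable section

attribute [local instance] ZeroLEOneClass.factZeroLtOne

instance : IsProbabilityMeasure (volume : Measure (AddCircle (1 : ℝ))) :=
  ⟨UnitAddCircle.measure_univ⟩

/-- The circle `ℝ/ℤ`, with its quotient metric and its Haar (Lebesgue) probability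
measure `volume`. -/
abbrev Circle1 := AddCircle (1 : ℝ)

/-- The `n`-th Birkhoff average of the observable `φ` along the orbit of `x` under `f`. -/
def birkhoffAvg {X : Type*} [MetricSpace X] (f : X → X) (φ : X → ℝ) (x : X) (n : ℕ) : ℝ :=
  (n : ℝ)⁻¹ * ∑ j ∈ Finset.range n, φ (f^[j] x)

/-- `μ` is the Birkhoff limit of the point `x` under `f`: the probability measures
`(1/n) ∑_{j<n} δ_{f^j x}` converge to `μ` in the weak* topology, i.e. the Birkhoff averages of
every continuous observable converge to the corresponding integral. -/
def IsBirkhoffLimit {X : Type*} [MetricSpace X] [MeasurableSpace X] [BorelSpace X]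
    (f : X → X) (x : X) (μ : Measure X) : Prop :=
  IsProbabilityMeasure μ ∧
    ∀ φ : C(X, ℝ), Tendsto (birkhoffAvg f φ x) atTop (𝓝 (∫ y, φ y ∂μ))

/-- The basin of a measure `μ`: the set of points whose Birkhoff limit exists and equals `μ`. -/
def basin {X : Type*} [MetricSpace X] [MeasurableSpace X] [BorelSpace X]
    (f : X → X) (μ : Measure X) : Set X := {x | IsBirkhoffLimit f x μ}

/-- `F` is an increasing (degree-one) lift of the circle map `f`. -/
def IsOrientedLift (f : Circle1 → Circle1) (F : ℝ → ℝ) : Prop :=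
  Continuous F ∧ StrictMono F ∧ (∀ x : ℝ, F (x + 1) = F x + 1) ∧
    ∀ x : ℝ, f (↑x) = ↑(F x)

section AuxLemmas

-- Aux 1: orbit of a monotone continuous map of ℝ with an "integer grid" of fixed points converges
lemma orbit_tendsto_fixed (G : ℝ → ℝ) (hGc : Continuous G) (hGm : Monotone G)
    (t₀ : ℝ) (h0 : G t₀ = t₀) (hG1 : ∀ u, G (u + 1) = G u + 1) (t : ℝ) :
    ∃ s, G s = s ∧ Tendsto (fun k => G^[k] t) atTop (𝓝 s) := by
  have hGn : ∀ (u : ℝ) (n : ℕ), G (u + n) = G u + n := by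
    intro u n
    induction n with
    | zero => simp
    | succ n ih => push_cast; rw [← add_assoc, hG1, ih]; push_cast; ring
  have hfixup : ∀ n : ℕ, G (t₀ + n) = t₀ + n := fun n => by rw [hGn, h0]
  have hfixdn : ∀ n : ℕ, G (t₀ - n) = t₀ - n := by
    intro n
    have := hGn (t₀ - n) n
    simp only [sub_add_cancel, h0] at this
    linarith
  obtain ⟨nu, hnu⟩ := exists_nat_ge (t - t₀)
  have hub : t ≤ t₀ + nu := by linarith
  obtain ⟨nd, hnd⟩ := exists_nat_ge (t₀ - t)
  have hlb : t₀ - nd ≤ t := by linarith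
  rcases le_total t (G t) with hc | hc
  · -- increasing orbit
    have hmono : Monotone fun k => G^[k] t := by
      apply monotone_nat_of_le_succ
      intro k
      induction k with
      | zero => simpa using hc
      | succ k ih =>
        calc G^[k+1] t = G (G^[k] t) := iterate_succ_apply' G k t
        _ ≤ G (G^[k+1] t) := hGm ih
        _ = G^[k+1+1] t := (iterate_succ_apply' G (k+1) t).symm
    have hbdd : ∀ k, G^[k] t ≤ t₀ + nu := by
      intro k
      induction k with
      | zero => simpa using hub
      | succ k ih =>
        rw [iterate_succ_apply']
        calc G (G^[k] t) ≤ G (t₀ + nu) := hGm ih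
        _ = t₀ + nu := hfixup nu
    have hbb : BddAbove (Set.range fun k => G^[k] t) := ⟨t₀ + nu, by rintro _ ⟨k, rfl⟩; exact hbdd k⟩
    have hten := tendsto_atTop_ciSup hmono hbb
    refine ⟨_, ?_, hten⟩
    have h1 : Tendsto (fun k => G^[k+1] t) atTop (𝓝 (⨆ k, G^[k] t)) :=
      (tendsto_add_atTop_iff_nat 1).2 hten
    have h2 : Tendsto (fun k => G (G^[k] t)) atTop (𝓝 (G (⨆ k, G^[k] t))) :=
      (hGc.tendsto _).comp hten
    refine tendsto_nhds_unique (h2.congr fun k => ?_) h1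
    rw [iterate_succ_apply']
  · -- decreasing orbit
    have hmono : Antitone fun k => G^[k] t := by
      apply antitone_nat_of_succ_le
      intro k
      induction k with
      | zero => simpa using hc
      | succ k ih =>
        calc G^[k+1+1] t = G (G^[k+1] t) := iterate_succ_apply' G (k+1) t
        _ ≤ G (G^[k] t) := hGm ih
        _ = G^[k+1] t := (iterate_succ_apply' G k t).symm
    have hbdd : ∀ k, t₀ - nd ≤ G^[k] t := by
      intro k
      induction k with
      | zero => simpa using hlb
      | succ k ih =>
        rw [iterate_succ_apply']
        calc t₀ - nd = G (t₀ - nd) := (hfixdn nd).symm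
        _ ≤ G (G^[k] t) := hGm ih
    have hbb : BddBelow (Set.range fun k => G^[k] t) := ⟨t₀ - nd, by rintro _ ⟨k, rfl⟩; exact hbdd k⟩
    have hten := tendsto_atTop_ciInf hmono hbb
    refine ⟨_, ?_, hten⟩
    have h1 : Tendsto (fun k => G^[k+1] t) atTop (𝓝 (⨅ k, G^[k] t)) :=
      (tendsto_add_atTop_iff_nat 1).2 hten
    have h2 : Tendsto (fun k => G (G^[k] t)) atTop (𝓝 (G (⨅ k, G^[k] t))) :=
      (hGc.tendsto _).comp hten
    refine tendsto_nhds_unique (h2.congr fun k => ?_) h1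
    rw [iterate_succ_apply']

lemma sum_range_of_periodic (c : ℕ → ℝ) (q : ℕ) (hq : 0 < q) (hc : ∀ i, c (i + q) = c i)
    (n : ℕ) :
    ∑ j ∈ Finset.range n, c j
      = (n / q : ℕ) * ∑ j ∈ Finset.range q, c j + ∑ j ∈ Finset.range (n % q), c j := by
  have shift : ∀ m, ∑ j ∈ Finset.range (q + m), c j
      = ∑ j ∈ Finset.range q, c j + ∑ j ∈ Finset.range m, c j := by
    intro m
    rw [Finset.sum_range_add]
    congr 1
    exact Finset.sum_congr rfl fun i _ => by rw [add_comm q i, hc]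
  have key : ∀ (k r : ℕ), ∑ j ∈ Finset.range (q * k + r), c j
      = k * ∑ j ∈ Finset.range q, c j + ∑ j ∈ Finset.range r, c j := by
    intro k
    induction k with
    | zero => simp
    | succ k ih =>
      intro r
      have : q * (k + 1) + r = q + (q * k + r) := by ring
      rw [this, shift, ih]
      push_cast
      ring
  have := key (n / q) (n % q)
  rwa [Nat.div_add_mod n q] at this

lemma cesaro_of_periodic (c : ℕ → ℝ) (q : ℕ) (hq : 0 < q) (hc : ∀ i, c (i + q) = c i) :
    Tendsto (fun n : ℕ => (n : ℝ)⁻¹ * ∑ j ∈ Finset.range n, c j) atTop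
      (𝓝 ((q : ℝ)⁻¹ * ∑ j ∈ Finset.range q, c j)) := by
  set S := ∑ j ∈ Finset.range q, c j with hS
  set Pm := ∑ j ∈ Finset.range q, |c j| with hPm
  have hPm0 : 0 ≤ Pm := Finset.sum_nonneg fun _ _ => abs_nonneg _
  rw [← tendsto_sub_nhds_zero_iff]
  refine squeeze_zero_norm' ?_ (tendsto_const_div_atTop_nhds_zero_nat (Pm + |S|))
  · filter_upwards [Ici_mem_atTop 1] with n hn
    have hn0 : (0 : ℝ) < n := by exact_mod_cast hn
    have hq0 : (0 : ℝ) < q := by exact_mod_cast hq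
    set k := n / q
    set r := n % q with hr
    have hrq : r < q := Nat.mod_lt _ hq
    have hkr : (n : ℝ) = q * k + r := by exact_mod_cast (Nat.div_add_mod n q).symm
    set P := ∑ j ∈ Finset.range r, c j with hP
    have hsum : ∑ j ∈ Finset.range n, c j = k * S + P := sum_range_of_periodic c q hq hc n
    have hPle : |P| ≤ Pm := by
      calc |P| ≤ ∑ j ∈ Finset.range r, |c j| := Finset.abs_sum_le_sum_abs _ _
      _ ≤ Pm := Finset.sum_le_sum_of_subset_of_nonneg
          (Finset.range_subset_range.2 hrq.le) (fun _ _ _ => abs_nonneg _)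
    have e1 : (n : ℝ)⁻¹ * ∑ j ∈ Finset.range n, c j - (q : ℝ)⁻¹ * S
        = ((q : ℝ) * P - r * S) / (q * n) := by
      rw [hsum]
      field_simp
      rw [hkr]; ring
    rw [Real.norm_eq_abs, e1, abs_div, abs_of_pos (by positivity : (0:ℝ) < (q:ℝ) * n)]
    have hnum : |(q : ℝ) * P - r * S| ≤ q * (Pm + |S|) := by
      have hrle : (r : ℝ) ≤ q := by exact_mod_cast hrq.le
      calc |(q : ℝ) * P - r * S| ≤ |(q:ℝ) * P| + |(r:ℝ) * S| := abs_sub _ _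
      _ = q * |P| + r * |S| := by rw [abs_mul, abs_mul, abs_of_pos hq0,
          abs_of_nonneg (by positivity : (0:ℝ) ≤ (r:ℝ))]
      _ ≤ q * Pm + q * |S| := by
          have := mul_le_mul_of_nonneg_right hrle (abs_nonneg S)
          nlinarith
      _ = q * (Pm + |S|) := by ring
    calc |(q : ℝ) * P - r * S| / (q * n) ≤ q * (Pm + |S|) / (q * n) := by gcongr
    _ = (Pm + |S|) / n := mul_div_mul_left _ _ hq0.ne'
end AuxLemmas

/-- If an orientation-preserving circle homeomorphism has a periodic point, then every point of
the circle has a well-defined Birkhoff limit, and this limit is a periodic Dirac measure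
`(1/q) ∑_{j<q} δ_{f^j p}` for some periodic point `p` of (minimal) period `q`. -/
theorem birkhoffLimit_periodicDirac_of_orientation_preserving_with_periodic_point
    (f : Circle1 → Circle1) (hf : IsHomeomorph f) (hor : ∃ F, IsOrientedLift f F)
    (hper : ∃ (p : Circle1) (q : ℕ), 1 ≤ q ∧ f^[q] p = p) :
    ∀ x : Circle1, ∃ (p : Circle1) (q : ℕ), 1 ≤ q ∧ f^[q] p = p ∧
      (∀ r, 1 ≤ r → r < q → f^[r] p ≠ p) ∧
      IsBirkhoffLimit f x
        ((q : ℝ≥0∞)⁻¹ • ∑ j ∈ Finset.range q, Measure.dirac (f^[j] p)) := by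
  intro x
  obtain ⟨F, hFc, hFm, hF1, hFlift⟩ := hor
  obtain ⟨p₀, q₀, hq₀, hp₀⟩ := hper
  have hq₀pos : 0 < q₀ := hq₀
  -- iterated lift
  have hlift : ∀ (k : ℕ) (t : ℝ), f^[k] (↑t : Circle1) = ↑(F^[k] t) := by
    intro k
    induction k with
    | zero => simp
    | succ k ih =>
      intro t
      rw [iterate_succ_apply' f, iterate_succ_apply' F, ih, hFlift]
  -- the lift of g = f^[q₀], with +1-equivariance
  have hG₀1 : ∀ (k : ℕ) (u : ℝ), F^[k] (u + 1) = F^[k] u + 1 := by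
    intro k
    induction k with
    | zero => simp
    | succ k ih => intro u; rw [iterate_succ_apply' F, iterate_succ_apply' F, ih, hF1]
  -- fixed point of the lift up to an integer
  obtain ⟨t₀, ht₀⟩ := QuotientAddGroup.mk_surjective p₀
  have ht₀' : (↑(F^[q₀] t₀) : Circle1) = ↑t₀ := by
    rw [← hlift, ht₀, hp₀]
  obtain ⟨m, hm⟩ : ∃ m : ℤ, F^[q₀] t₀ - t₀ = m • (1 : ℝ) := by
    have := (QuotientAddGroup.eq_iff_sub_mem).1 ht₀'
    obtain ⟨m, hm⟩ := AddSubgroup.mem_zmultiples_iff.1 this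
    exact ⟨m, hm.symm⟩
  set G : ℝ → ℝ := fun u => F^[q₀] u - m with hGdef
  have hGc : Continuous G := (hFc.iterate q₀).sub continuous_const
  have hGm : Monotone G := fun a b hab => by
    simpa [hGdef] using ((hFm.iterate q₀).monotone hab)
  have hG1 : ∀ u, G (u + 1) = G u + 1 := by
    intro u; simp only [hGdef, hG₀1]; ring
  have hGt₀ : G t₀ = t₀ := by
    simp only [hGdef]
    have : (m : ℝ) = F^[q₀] t₀ - t₀ := by rw [hm]; simp
    linarith [this]
  have hGlift : ∀ u : ℝ, f^[q₀] (↑u : Circle1) = ↑(G u) := by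
    intro u
    rw [hlift]
    refine (QuotientAddGroup.eq_iff_sub_mem).2 ?_
    have : F^[q₀] u - G u = (m : ℝ) := by simp [hGdef]
    rw [this]
    exact ⟨m, by simp⟩
  have hGlift' : ∀ (k : ℕ) (u : ℝ), (f^[q₀])^[k] (↑u : Circle1) = ↑(G^[k] u) := by
    intro k
    induction k with
    | zero => simp
    | succ k ih =>
      intro u
      rw [iterate_succ_apply' _ k, iterate_succ_apply' G k, ih, hGlift]
  -- get a representative of x, and the limit point
  obtain ⟨t, ht⟩ := QuotientAddGroup.mk_surjective x
  obtain ⟨s, hGs, hconv⟩ := orbit_tendsto_fixed G hGc hGm t₀ hGt₀ hG1 t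
  set p : Circle1 := ↑s with hpdef
  have hfp : f^[q₀] p = p := by rw [hpdef, hGlift, hGs]
  have hfp' : IsPeriodicPt f q₀ p := hfp
  set q : ℕ := minimalPeriod f p with hqdef
  have hqpos : 0 < q := hfp'.minimalPeriod_pos hq₀pos
  have hfq : f^[q] p = p := isPeriodicPt_minimalPeriod f p
  -- orbit convergence
  have horb : Tendsto (fun k => (f^[q₀])^[k] x) atTop (𝓝 p) := by
    have hcoe : Continuous ((↑·) : ℝ → Circle1) := continuous_quotient_mk'
    have := (hcoe.tendsto s).comp hconv
    refine this.congr fun k => ?_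
    simp only [Function.comp_apply, ← hGlift', ht]
  refine ⟨p, q, hqpos, hfq, ?_, ?_, ?_⟩
  · intro r hr1 hrq hcon
    exact (not_isPeriodicPt_of_pos_of_lt_minimalPeriod (by omega : r ≠ 0) hrq) hcon
  · -- probability measure
    constructor
    simp only [Measure.smul_apply, Measure.coe_finset_sum, Finset.sum_apply,
      Measure.dirac_apply' _ MeasurableSet.univ, Set.indicator_univ, Pi.one_apply,
      Finset.sum_const, Finset.card_range, nsmul_eq_mul, mul_one, smul_eq_mul]
    exact ENNReal.inv_mul_cancel (by exact_mod_cast hqpos.ne') (natCast_ne_top q)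
  · intro φ
    set c : ℕ → ℝ := fun j => φ (f^[j] p) with hcdef
    have hcper : ∀ i, c (i + q) = c i := by
      intro i
      simp only [hcdef, iterate_add_apply, hfq]
    set S := ∑ j ∈ Finset.range q, c j with hSdef
    -- the integral
    have hφint : ∀ j ∈ Finset.range q, Integrable φ (Measure.dirac (f^[j] p)) := by
      intro j _
      exact (integrable_const ‖φ‖).mono' φ.continuous.aestronglyMeasurable
        (Eventually.of_forall fun y => φ.norm_coe_le_norm y)
    have hI : ∫ y, φ y ∂((q : ℝ≥0∞)⁻¹ • ∑ j ∈ Finset.range q, Measure.dirac (f^[j] p))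
        = (q : ℝ)⁻¹ * S := by
      rw [integral_smul_measure, integral_finset_sum_measure hφint]
      simp [integral_dirac, ENNReal.toReal_inv, hSdef, hcdef, smul_eq_mul]
    rw [hI]
    -- converging part
    have hfpq₀ : ∀ j : ℕ, f^[j] p = f^[j % q₀] p := by
      intro j
      conv_lhs => rw [← Nat.mod_add_div j q₀]
      rw [iterate_add_apply, iterate_mul]
      congr 1
      exact Function.IsFixedPt.iterate hfp (j / q₀)
    have hdecomp : ∀ j : ℕ, f^[j] x = f^[j % q₀] ((f^[q₀])^[j / q₀] x) := by
      intro j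
      conv_lhs => rw [← Nat.mod_add_div j q₀]
      rw [iterate_add_apply, iterate_mul]
    set u : ℕ → ℝ := fun j => φ (f^[j] x) - c j with hudef
    have hu : Tendsto u atTop (𝓝 0) := by
      rw [NormedAddCommGroup.tendsto_nhds_zero]
      intro ε hε
      have hv : ∀ r : ℕ, Tendsto (fun k => φ (f^[r] ((f^[q₀])^[k] x))) atTop
          (𝓝 (φ (f^[r] p))) :=
        fun r => ((φ.continuous.comp (hf.continuous.iterate r)).tendsto p).comp horb
      have hv' : ∀ r : ℕ, ∃ N, ∀ k ≥ N, |φ (f^[r] ((f^[q₀])^[k] x)) - φ (f^[r] p)| < ε := by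
        intro r
        have := Metric.tendsto_atTop.1 (hv r) ε hε
        simpa [Real.dist_eq] using this
      choose Nf hNf using hv'
      set N := Finset.sup (Finset.range q₀) Nf with hNdef
      rw [eventually_atTop]
      refine ⟨q₀ * N + q₀, fun j hj => ?_⟩
      have hk : N ≤ j / q₀ := by
        rw [Nat.le_div_iff_mul_le hq₀pos]
        calc N * q₀ ≤ q₀ * N + q₀ := by rw [mul_comm]; omega
        _ ≤ j := hj
      have hrmem : j % q₀ ∈ Finset.range q₀ := Finset.mem_range.2 (Nat.mod_lt _ hq₀pos)
      have hNr : Nf (j % q₀) ≤ j / q₀ := le_trans (Finset.le_sup hrmem) hk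
      have := hNf (j % q₀) (j / q₀) hNr
      rw [Real.norm_eq_abs]
      calc |u j| = |φ (f^[j % q₀] ((f^[q₀])^[j / q₀] x)) - φ (f^[j % q₀] p)| := by
            rw [hudef]
            simp only [hcdef]
            rw [hdecomp j, hfpq₀ j]
      _ < ε := this
    have h1 : Tendsto (fun n : ℕ => (n : ℝ)⁻¹ * ∑ j ∈ Finset.range n, u j) atTop (𝓝 0) :=
      hu.cesaro
    have h2 := cesaro_of_periodic c q hqpos hcper
    have := h1.add h2
    rw [zero_add] at this
    refine this.congr fun n => ?_
    rw [birkhoffAvg, ← mul_add, ← Finset.sum_add_distrib]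
    congr 1
    refine Finset.sum_congr rfl fun j _ => ?_
    simp [hudef]


end
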